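/- arXiv:1011.1938 — 2 statements merged into one kernel-verified Lean document; each statement's English description precedes it below -/
import Mathlib

section
/- Let λ ∈ (1/2, 1), β = 1/λ, and define F_β on I_λ \ C_λ (where I_λ = [0, λ/(1−λ)] and C_λ = [λ, λ²/(1−λ)]) by F_β(x) = βx for x ∈ [0,λ) and F_β(x) = βx − 1 for x ∈ (λ²/(1−λ), λ/(1−λ)]. If i, j are sequences in {0,1}^ℕ whose full forward F_β-orbits are defined (i.e. Π_λ(σ^n i), Π_λ(σ^n j) ∉ C_λ for all n ≥ 0, with digits given by the symbolic dynamics of F_β), then |Π_λ(i) − Π_λ(j)| ≥ |C_λ|·λ^{|i∧j|}, where |C_λ| = λ(2λ−1)/(1−λ). Consequently Π_λ restricted to the set of unique expansions is bi-Lipschitz from the metric ϱ(i,j) = λ^{|i∧j|} to the Euclidean metric. -/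
noncomputable section

def binSeq (i : ℕ → ℕ) : Prop := ∀ n, i n ≤ 1

def piL (l : ℝ) (i : ℕ → ℕ) : ℝ := ∑' n : ℕ, (i n : ℝ) * l ^ (n + 1)

def shiftN (i : ℕ → ℕ) (n : ℕ) : ℕ → ℕ := fun m => i (m + n)

/-- The full forward `F_β`-orbit of `Π_λ(i)` is defined, with symbolic dynamics given
by the digits of `i`: at each time the orbit point `Π_λ(σ^n i)` lies in `[0,λ)` if the
current digit is 0, and in `(λ²/(1-λ), λ/(1-λ)]` if it is 1 (so it avoids `C_λ`). -/
def goodOrbit (l : ℝ) (i : ℕ → ℕ) : Prop :=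
  binSeq i ∧ ∀ n : ℕ,
    (i n = 0 → piL l (shiftN i n) < l) ∧
    (i n = 1 → piL l (shiftN i n) > l ^ 2 / (1 - l))

lemma summ {l : ℝ} (hl0 : 0 < l) (hl1 : l < 1) {f : ℕ → ℕ} (hf : binSeq f) :
    Summable (fun n => (f n : ℝ) * l ^ (n + 1)) := by
  apply Summable.of_nonneg_of_le (fun n => by positivity) (fun n => ?_)
    (summable_geometric_of_lt_one hl0.le hl1)
  calc (f n : ℝ) * l ^ (n + 1) ≤ 1 * l ^ (n + 1) := by
        apply mul_le_mul_of_nonneg_right _ (by positivity)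
        exact_mod_cast hf n
    _ = l ^ n * l := by ring
    _ ≤ l ^ n * 1 := by nlinarith [pow_nonneg hl0.le n]
    _ = l ^ n := by ring

lemma piL_nonneg {l : ℝ} (hl0 : 0 < l) {f : ℕ → ℕ} : 0 ≤ piL l f :=
  tsum_nonneg (fun n => by positivity)

lemma piL_le {l : ℝ} (hl0 : 0 < l) (hl1 : l < 1) {f : ℕ → ℕ} (hf : binSeq f) :
    piL l f ≤ l / (1 - l) := by
  have h1 : Summable (fun n : ℕ => l ^ (n + 1)) := by
    simpa [pow_succ, mul_comm] using (summable_geometric_of_lt_one hl0.le hl1).mul_left l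
  have h2 : piL l f ≤ ∑' n : ℕ, l ^ (n + 1) := by
    apply Summable.tsum_le_tsum _ (summ hl0 hl1 hf) h1
    intro n
    calc (f n : ℝ) * l ^ (n + 1) ≤ 1 * l ^ (n + 1) := by
          apply mul_le_mul_of_nonneg_right _ (by positivity)
          exact_mod_cast hf n
      _ = l ^ (n + 1) := one_mul _
  have h3 : ∑' n : ℕ, l ^ (n + 1) = l / (1 - l) := by
    have := tsum_geometric_of_lt_one hl0.le hl1
    calc ∑' n : ℕ, l ^ (n + 1) = ∑' n : ℕ, l * l ^ n := by
          simp [pow_succ, mul_comm]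
      _ = l * (1 - l)⁻¹ := by rw [tsum_mul_left, this]
      _ = l / (1 - l) := by rw [div_eq_mul_inv]
  linarith

lemma piL_step {l : ℝ} (hl0 : 0 < l) (hl1 : l < 1) {f : ℕ → ℕ} (hf : binSeq f) :
    piL l f = (f 0 : ℝ) * l + l * piL l (shiftN f 1) := by
  have hs : Summable (fun n => (f n : ℝ) * l ^ (n + 1)) := summ hl0 hl1 hf
  have := Summable.tsum_eq_zero_add hs
  rw [piL, this]
  have : ∑' n : ℕ, (f (n + 1) : ℝ) * l ^ (n + 1 + 1)
      = l * ∑' n : ℕ, (f (n + 1) : ℝ) * l ^ (n + 1) := by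
    rw [← tsum_mul_left]
    congr 1; funext n; ring
  rw [this]
  simp [piL, shiftN]

lemma shift_shift (f : ℕ → ℕ) (n : ℕ) : shiftN (shiftN f n) 1 = shiftN f (n + 1) := by
  funext m; simp [shiftN]; ring_nf

lemma shiftN_bin {f : ℕ → ℕ} (hf : binSeq f) (n : ℕ) : binSeq (shiftN f n) :=
  fun m => hf _

theorem stmt5 (l : ℝ) (hl0 : 1 / 2 < l) (hl1 : l < 1)
    (i j : ℕ → ℕ) (hi : goodOrbit l i) (hj : goodOrbit l j) :
    ∀ n : ℕ, (∀ m < n, i m = j m) → i n ≠ j n →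
      l * (2 * l - 1) / (1 - l) * l ^ n ≤ |piL l i - piL l j| ∧
      |piL l i - piL l j| ≤ l / (1 - l) * l ^ n := by
  have hpos : 0 < l := by linarith
  obtain ⟨hib, hio⟩ := hi
  obtain ⟨hjb, hjo⟩ := hj
  have key : ∀ n : ℕ, (∀ m < n, i m = j m) →
      piL l i - piL l j = l ^ n * (piL l (shiftN i n) - piL l (shiftN j n)) := by
    intro n
    induction n with
    | zero =>
      intro _
      have e : ∀ f : ℕ → ℕ, shiftN f 0 = f := fun f => funext fun m => by simp [shiftN]
      simp [e]
    | succ n ih =>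
      intro hagree
      have h1 := ih (fun m hm => hagree m (by omega))
      have h2 := piL_step hpos hl1 (shiftN_bin hib n)
      have h3 := piL_step hpos hl1 (shiftN_bin hjb n)
      rw [shift_shift] at h2 h3
      have h4 : (shiftN i n) 0 = (shiftN j n) 0 := by
        simp only [shiftN, Nat.zero_add]
        exact hagree n (by omega)
      rw [h1, h2, h3, h4]
      ring
  intro n hagree hne
  have hd := key n hagree
  set a := piL l (shiftN i n) with ha
  set b := piL l (shiftN j n) with hb
  have hin := hib n
  have hjn := hjb n
  have hgap : l * (2 * l - 1) / (1 - l) ≤ |a - b| ∧ |a - b| ≤ l / (1 - l) := by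
    have hal : 0 ≤ a := piL_nonneg hpos
    have hbl : 0 ≤ b := piL_nonneg hpos
    have hau : a ≤ l / (1 - l) := piL_le hpos hl1 (shiftN_bin hib n)
    have hbu : b ≤ l / (1 - l) := piL_le hpos hl1 (shiftN_bin hjb n)
    have h1l : 0 < 1 - l := by linarith
    interval_cases h : i n <;> interval_cases h' : j n
    · omega
    · have e1 : a < l := (hio n).1 h
      have e2 : b > l ^ 2 / (1 - l) := (hjo n).2 h'
      have e2' : l ^ 2 / (1 - l) * (1 - l) = l ^ 2 := div_mul_cancel₀ _ (by linarith)
      rw [abs_sub_comm, abs_of_nonneg (by nlinarith)]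
      constructor
      · rw [div_le_iff₀ h1l]; nlinarith
      · linarith
    · have e1 : a > l ^ 2 / (1 - l) := (hio n).2 h
      have e2 : b < l := (hjo n).1 h'
      have e1' : l ^ 2 / (1 - l) * (1 - l) = l ^ 2 := div_mul_cancel₀ _ (by linarith)
      rw [abs_of_nonneg (by nlinarith)]
      constructor
      · rw [div_le_iff₀ h1l]; nlinarith
      · linarith
    · omega
  rw [hd, abs_mul, abs_of_nonneg (pow_nonneg hpos.le n)]
  constructor
  · rw [mul_comm]
    exact mul_le_mul_of_nonneg_left hgap.1 (pow_nonneg hpos.le n)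
  · rw [mul_comm (l / (1 - l))]
    exact mul_le_mul_of_nonneg_left hgap.2 (pow_nonneg hpos.le n)
end
end

section
/- Let λ ∈ (1/2, 1) and k ∈ ℕ with 2λ − 1 < λ^{k−1}(1−λ), and let η > 0 be small enough that every ball B(x,η) with x ∈ I_λ meets S_w(I_λ) for at most two words w ∈ {0,1}^k. Then for every n ≥ 1 and every x ∈ I_λ, the number of words w ∈ {0,1}^{kn} such that S_w(I_λ) ∩ B(x, λ^{(n−1)k} η) ≠ ∅ is at most 2^n. -/
noncomputable section

def Smap (l : ℝ) (b : Bool) : ℝ → ℝ := fun x => l * (x + if b then 1 else 0)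

def Sword (l : ℝ) (w : List Bool) : ℝ → ℝ := w.foldr (fun b f => Smap l b ∘ f) id

lemma sword_nil (l : ℝ) : Sword l [] = id := rfl

lemma sword_cons (l : ℝ) (b : Bool) (w : List Bool) :
    Sword l (b :: w) = Smap l b ∘ Sword l w := rfl

lemma sword_append (l : ℝ) (a b : List Bool) :
    Sword l (a ++ b) = Sword l a ∘ Sword l b := by
  induction a with
  | nil => rfl
  | cons c a ih => rw [List.cons_append, sword_cons, sword_cons, ih]; rfl

lemma sword_affine (l : ℝ) (w : List Bool) (x : ℝ) :
    Sword l w x = l ^ w.length * x + Sword l w 0 := by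
  induction w generalizing x with
  | nil => simp [sword_nil]
  | cons b w ih =>
    simp only [sword_cons, Function.comp_apply, Smap, List.length_cons]
    rw [ih x, ih 0]
    ring

lemma smap_mem (l : ℝ) (hl0 : 0 < l) (hl1 : l < 1) (b : Bool) {x : ℝ}
    (hx : x ∈ Set.Icc (0 : ℝ) (l / (1 - l))) :
    Smap l b x ∈ Set.Icc (0 : ℝ) (l / (1 - l)) := by
  obtain ⟨h1, h2⟩ := hx
  have hl' : 0 < 1 - l := by linarith
  have hM : l * (l / (1 - l) + 1) = l / (1 - l) := by field_simp; ring
  cases b with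
  | false =>
    have hval : Smap l false x = l * x := by simp [Smap]
    rw [hval]
    constructor
    · positivity
    · calc l * x ≤ l * (l / (1 - l)) := by nlinarith
        _ ≤ l / (1 - l) := by nlinarith [div_nonneg hl0.le hl'.le]
  | true =>
    have hval : Smap l true x = l * (x + 1) := by simp [Smap]
    rw [hval]
    constructor
    · positivity
    · calc l * (x + 1) ≤ l * (l / (1 - l) + 1) := by nlinarith
        _ = l / (1 - l) := hM

lemma sword_mem (l : ℝ) (hl0 : 0 < l) (hl1 : l < 1) (w : List Bool) {x : ℝ}
    (hx : x ∈ Set.Icc (0 : ℝ) (l / (1 - l))) :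
    Sword l w x ∈ Set.Icc (0 : ℝ) (l / (1 - l)) := by
  induction w with
  | nil => exact hx
  | cons b w ih => exact smap_mem l hl0 hl1 b ih

lemma proj_lip (M x y : ℝ) (hy : y ∈ Set.Icc 0 M) :
    |y - max 0 (min x M)| ≤ |y - x| := by
  have hyy : y = max 0 (min y M) := by
    rw [min_eq_left hy.2, max_eq_right hy.1]
  calc |y - max 0 (min x M)| = |max 0 (min y M) - max 0 (min x M)| := by rw [← hyy]
    _ ≤ max |(0 : ℝ) - 0| |min y M - min x M| := abs_max_sub_max_le_max _ _ _ _
    _ ≤ |y - x| := by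
        apply max_le
        · simp [abs_nonneg]
        · calc |min y M - min x M| ≤ max |y - x| |M - M| := abs_min_sub_min_le_max _ _ _ _
            _ ≤ |y - x| := by apply max_le le_rfl; simp [abs_nonneg]

lemma ofFn_comp_cast {α : Type*} {m n : ℕ} (h : m = n) (f : Fin n → α) :
    List.ofFn (f ∘ Fin.cast h) = List.ofFn f := by
  subst h
  rfl

lemma count_helper {β γ : Type*} [Fintype β] [Fintype γ]
    (A : Set (β × γ)) (J : Set β) (T : β → Set γ) (N : ℕ)
    (h : ∀ p ∈ A, p.1 ∈ J ∧ p.2 ∈ T p.1)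
    (hJ : J.ncard ≤ 2) (hT : ∀ j, (T j).ncard ≤ N) :
    A.ncard ≤ 2 * N := by
  classical
  have hsub : A ⊆ ⋃ j ∈ J, ({j} : Set β) ×ˢ T j := by
    intro p hp
    obtain ⟨h1, h2⟩ := h p hp
    exact Set.mem_biUnion h1 (⟨rfl, h2⟩ : p ∈ ({p.1} : Set β) ×ˢ T p.1)
  have key : (⋃ j ∈ J, ({j} : Set β) ×ˢ T j).ncard ≤ 2 * N := by
    rw [Set.ncard_eq_toFinset_card']
    have hsub2 : (⋃ j ∈ J, ({j} : Set β) ×ˢ T j).toFinset ⊆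
        J.toFinset.biUnion (fun j => (({j} : Set β) ×ˢ T j).toFinset) := by
      intro p hp
      simp only [Set.mem_toFinset, Set.mem_iUnion] at hp
      obtain ⟨j, hj, hpj⟩ := hp
      simp only [Finset.mem_biUnion, Set.mem_toFinset]
      exact ⟨j, hj, hpj⟩
    calc (⋃ j ∈ J, ({j} : Set β) ×ˢ T j).toFinset.card
        ≤ (J.toFinset.biUnion (fun j => (({j} : Set β) ×ˢ T j).toFinset)).card :=
          Finset.card_le_card hsub2
      _ ≤ ∑ j ∈ J.toFinset, (({j} : Set β) ×ˢ T j).toFinset.card :=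
          Finset.card_biUnion_le
      _ ≤ ∑ _j ∈ J.toFinset, N := by
          apply Finset.sum_le_sum
          intro j _
          have : (({j} : Set β) ×ˢ T j).ncard = (T j).ncard := by
            rw [Set.singleton_prod]
            exact Set.ncard_image_of_injective _ (fun a b hab => by
              simpa using hab)
          rw [← Set.ncard_eq_toFinset_card']
          exact this.le.trans (hT j)
      _ = J.toFinset.card * N := by rw [Finset.sum_const, smul_eq_mul]
      _ ≤ 2 * N := by
          apply Nat.mul_le_mul_right
          rw [← Set.ncard_eq_toFinset_card']
          exact hJ
  exact (Set.ncard_le_ncard hsub (Set.toFinite _)).trans key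

theorem stmt14 (l : ℝ) (k : ℕ) (hk : 2 ≤ k) (hl0 : 1 / 2 < l) (hl1 : l < 1)
    (hΛ : 2 * l - 1 < l ^ (k - 1) * (1 - l))
    (η : ℝ) (hη : 0 < η)
    (hbase : ∀ x ∈ Set.Icc (0 : ℝ) (l / (1 - l)),
      {w : Fin k → Bool |
        ((Sword l (List.ofFn w) '' Set.Icc 0 (l / (1 - l))) ∩
          Metric.ball x η).Nonempty}.ncard ≤ 2) :
    ∀ n : ℕ, 1 ≤ n → ∀ x ∈ Set.Icc (0 : ℝ) (l / (1 - l)),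
      {w : Fin (k * n) → Bool |
        ((Sword l (List.ofFn w) '' Set.Icc 0 (l / (1 - l))) ∩
          Metric.ball x (l ^ ((n - 1) * k) * η)).Nonempty}.ncard ≤ 2 ^ n := by
  have hlpos : (0 : ℝ) < l := by linarith
  have hl' : (0 : ℝ) < 1 - l := by linarith
  set M : ℝ := l / (1 - l) with hM
  have hM0 : 0 ≤ M := div_nonneg hlpos.le hl'.le
  set I : Set ℝ := Set.Icc 0 M with hI
  -- strengthen hbase to all real centers
  have hbase' : ∀ x : ℝ,
      {w : Fin k → Bool |
        ((Sword l (List.ofFn w) '' I) ∩ Metric.ball x η).Nonempty}.ncard ≤ 2 := by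
    intro x
    set p : ℝ := max 0 (min x M) with hp
    have hpI : p ∈ I := by
      constructor
      · exact le_max_left _ _
      · exact max_le hM0 (min_le_right _ _)
    have hsub : {w : Fin k → Bool |
        ((Sword l (List.ofFn w) '' I) ∩ Metric.ball x η).Nonempty} ⊆
        {w : Fin k → Bool |
        ((Sword l (List.ofFn w) '' I) ∩ Metric.ball p η).Nonempty} := by
      intro w ⟨y, hy1, hy2⟩
      refine ⟨y, hy1, ?_⟩
      obtain ⟨z, hz, hzy⟩ := hy1
      have hyI : y ∈ I := hzy ▸ sword_mem l hlpos hl1 _ hz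
      rw [Metric.mem_ball, Real.dist_eq] at hy2 ⊢
      exact lt_of_le_of_lt (proj_lip M x y hyI) hy2
    exact (Set.ncard_le_ncard hsub (Set.toFinite _)).trans (hbase p hpI)
  -- main induction, for all real centers
  have main : ∀ n : ℕ, 1 ≤ n → ∀ x : ℝ,
      {w : Fin (k * n) → Bool |
        ((Sword l (List.ofFn w) '' I) ∩
          Metric.ball x (l ^ ((n - 1) * k) * η)).Nonempty}.ncard ≤ 2 ^ n := by
    intro n hn
    induction n, hn using Nat.le_induction with
    | base =>
      intro x
      have hcast : k = k * 1 := (Nat.mul_one k).symm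
      have hradius : l ^ ((1 - 1) * k) * η = η := by norm_num
      rw [hradius]
      have hinj : Function.Injective
          (fun (w : Fin (k * 1) → Bool) => w ∘ Fin.cast hcast) := by
        apply Function.Surjective.injective_comp_right
        exact fun i => ⟨Fin.cast hcast.symm i, rfl⟩
      calc {w : Fin (k * 1) → Bool |
            ((Sword l (List.ofFn w) '' I) ∩ Metric.ball x η).Nonempty}.ncard
          = ((fun (w : Fin (k * 1) → Bool) => w ∘ Fin.cast hcast) ''
            {w : Fin (k * 1) → Bool |
            ((Sword l (List.ofFn w) '' I) ∩ Metric.ball x η).Nonempty}).ncard :=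
            (Set.ncard_image_of_injective _ hinj).symm
        _ ≤ 2 := by
            refine le_trans (Set.ncard_le_ncard ?_ (Set.toFinite _)) (hbase' x)
            rintro v ⟨w, hw, rfl⟩
            simpa [ofFn_comp_cast hcast w] using hw
    | succ n hn ih =>
      intro x
      have hcast : k * (n + 1) = k + k * n := by ring
      have hlk : (0 : ℝ) < l ^ k := pow_pos hlpos k
      -- the splitting map
      set Φ : (Fin (k * (n + 1)) → Bool) → (Fin k → Bool) × (Fin (k * n) → Bool) :=
        fun w => (fun i => (w ∘ Fin.cast hcast.symm) (Fin.castAdd (k * n) i),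
                  fun i => (w ∘ Fin.cast hcast.symm) (Fin.natAdd k i)) with hΦ
      have hofFn : ∀ w : Fin (k * (n + 1)) → Bool,
          List.ofFn w = List.ofFn (Φ w).1 ++ List.ofFn (Φ w).2 := by
        intro w
        rw [← ofFn_comp_cast hcast.symm w, List.ofFn_add]; rfl
      have hΦinj : Function.Injective Φ := by
        intro w w' hww
        have h1 := congrFun (congrArg Prod.fst hww)
        have h2 := congrFun (congrArg Prod.snd hww)
        have : ∀ i : Fin (k + k * n),
            (w ∘ Fin.cast hcast.symm) i = (w' ∘ Fin.cast hcast.symm) i := by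
          intro i
          refine Fin.addCases (fun i => h1 i) (fun i => h2 i) i
        have hcomp : w ∘ Fin.cast hcast.symm = w' ∘ Fin.cast hcast.symm :=
          funext this
        have hsurj : Function.Surjective (Fin.cast hcast.symm) :=
          fun i => ⟨Fin.cast hcast i, rfl⟩
        exact hsurj.injective_comp_right hcomp
      set A : Set (Fin (k * (n + 1)) → Bool) :=
        {w | ((Sword l (List.ofFn w) '' I) ∩
          Metric.ball x (l ^ ((n + 1 - 1) * k) * η)).Nonempty} with hA
      set J : Set (Fin k → Bool) :=
        {j | ((Sword l (List.ofFn j) '' I) ∩ Metric.ball x η).Nonempty} with hJdef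
      set T : (Fin k → Bool) → Set (Fin (k * n) → Bool) :=
        fun j => {t | ((Sword l (List.ofFn t) '' I) ∩
          Metric.ball ((x - Sword l (List.ofFn j) 0) / l ^ k)
            (l ^ ((n - 1) * k) * η)).Nonempty} with hTdef
      have hmem : ∀ p ∈ Φ '' A, p.1 ∈ J ∧ p.2 ∈ T p.1 := by
        rintro p ⟨w, hw, rfl⟩
        obtain ⟨y, hy1, hy2⟩ := hw
        obtain ⟨z, hz, hzy⟩ := hy1
        have hsplit : Sword l (List.ofFn w) z =
            Sword l (List.ofFn (Φ w).1) (Sword l (List.ofFn (Φ w).2) z) := by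
          rw [hofFn w, sword_append]; rfl
        have hu : Sword l (List.ofFn (Φ w).2) z ∈ I :=
          sword_mem l hlpos hl1 _ hz
        have hball : |y - x| < l ^ ((n + 1 - 1) * k) * η := by
          rw [Metric.mem_ball, Real.dist_eq] at hy2; exact hy2
        have hrle : l ^ ((n + 1 - 1) * k) * η ≤ η := by
          have h1 : l ^ ((n + 1 - 1) * k) ≤ 1 :=
            pow_le_one₀ hlpos.le hl1.le
          nlinarith
        constructor
        · -- p.1 ∈ J
          refine ⟨y, ⟨Sword l (List.ofFn (Φ w).2) z, hu, ?_⟩, ?_⟩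
          · rw [← hsplit, hzy]
          · rw [Metric.mem_ball, Real.dist_eq]
            exact lt_of_lt_of_le hball hrle
        · -- p.2 ∈ T p.1
          set u : ℝ := Sword l (List.ofFn (Φ w).2) z with hudef
          set c : ℝ := Sword l (List.ofFn (Φ w).1) 0 with hcdef
          have hlen : (List.ofFn (Φ w).1).length = k := List.length_ofFn
          have hyval : y = l ^ k * u + c := by
            rw [← hzy, hsplit, sword_affine, hlen]
          refine ⟨u, ⟨z, hz, rfl⟩, ?_⟩
          rw [Metric.mem_ball, Real.dist_eq]
          have hexp : (n - 1) * k + k = (n + 1 - 1) * k := by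
            obtain ⟨m, rfl⟩ : ∃ m, n = m + 1 := ⟨n - 1, by omega⟩
            simp [Nat.add_sub_cancel]
            ring
          have hpow : l ^ ((n - 1) * k) * l ^ k = l ^ ((n + 1 - 1) * k) := by
            rw [← pow_add, hexp]
          have habs : |u - (x - c) / l ^ k| = |y - x| / l ^ k := by
            have h1 : u - (x - c) / l ^ k = (y - x) / l ^ k := by
              rw [hyval]
              field_simp
              ring
            rw [h1, abs_div, abs_of_pos hlk]
          rw [habs]
          rw [div_lt_iff₀ hlk]
          calc |y - x| < l ^ ((n + 1 - 1) * k) * η := hball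
            _ = l ^ ((n - 1) * k) * η * l ^ k := by rw [← hpow]; ring
      have hT : ∀ j, (T j).ncard ≤ 2 ^ n := fun j => ih _
      have hcount : (Φ '' A).ncard ≤ 2 * 2 ^ n :=
        count_helper (Φ '' A) J T (2 ^ n) hmem (hbase' x) hT
      calc A.ncard = (Φ '' A).ncard := (Set.ncard_image_of_injective _ hΦinj).symm
        _ ≤ 2 * 2 ^ n := hcount
        _ = 2 ^ (n + 1) := by ring
  intro n hn x _
  exact main n hn x
end
end
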